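/- Performance difference lemma: For any two policies π' and π, J(π') − J(π) = (1/(1−γ)) · E_{s∼d^{π'}, a∼π'(·|s)}[A_π(s,a)], where d^{π'}(s) = (1−γ) Σ_{t≥0} γ^t Pr(s_t = s | μ, π') is the discounted future state visitation distribution. -/

import Mathlib

open Finset

noncomputable section

variable {S A : Type*} [Fintype S] [Fintype A] [DecidableEq S]

/-- A policy assigns a probability distribution over actions to each state. -/
def IsPolicy (p : S → A → ℝ) : Prop :=
  (∀ s a, 0 ≤ p s a) ∧ ∀ s, ∑ a, p s a = 1

/-- A finite Markov decision process with discount factor `γ ∈ [0,1)`. -/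
structure FinMDP (S A : Type*) [Fintype S] [Fintype A] where
  P : S → A → S → ℝ
  P_nonneg : ∀ s a s', 0 ≤ P s a s'
  P_sum : ∀ s a, ∑ s', P s a s' = 1
  r : S → A → ℝ
  μ : S → ℝ
  μ_nonneg : ∀ s, 0 ≤ μ s
  μ_sum : ∑ s, μ s = 1
  γ : ℝ
  γ_nonneg : 0 ≤ γ
  γ_lt_one : γ < 1

/-- One step of the state-distribution evolution under a policy. -/
def stepDist (M : FinMDP S A) (π : S → A → ℝ) (d : S → ℝ) : S → ℝ :=
  fun s' => ∑ s, ∑ a, d s * π s a * M.P s a s'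

/-- Distribution of the state at time `t`, starting from `μ`, following `π`. -/
def stateDist (M : FinMDP S A) (π : S → A → ℝ) : ℕ → S → ℝ
  | 0 => M.μ
  | t + 1 => stepDist M π (stateDist M π t)

/-- Expected discounted return `J(π)` with initial distribution `μ`. -/
def Jret (M : FinMDP S A) (π : S → A → ℝ) : ℝ :=
  ∑' t : ℕ, M.γ ^ t * ∑ s, stateDist M π t s * ∑ a, π s a * M.r s a

/-- Discounted future state visitation distribution `d^π`. -/
def dVisit (M : FinMDP S A) (π : S → A → ℝ) (s : S) : ℝ :=
  (1 - M.γ) * ∑' t : ℕ, M.γ ^ t * stateDist M π t s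

/-- Distribution of the state at time `t` starting deterministically from `s₀`. -/
def stateDistFrom (M : FinMDP S A) (π : S → A → ℝ) (s₀ : S) : ℕ → S → ℝ
  | 0 => fun s => if s = s₀ then 1 else 0
  | t + 1 => stepDist M π (stateDistFrom M π s₀ t)

/-- State value function `V_π(s₀)`: expected discounted return starting from `s₀`. -/
def Vval (M : FinMDP S A) (π : S → A → ℝ) (s₀ : S) : ℝ :=
  ∑' t : ℕ, M.γ ^ t * ∑ s, stateDistFrom M π s₀ t s * ∑ a, π s a * M.r s a

/-- State-action value function `Q_π(s,a)`. -/
def Qval (M : FinMDP S A) (π : S → A → ℝ) (s : S) (a : A) : ℝ :=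
  M.r s a + M.γ * ∑ s', M.P s a s' * Vval M π s'

/-- Advantage function `A_π(s,a) = Q_π(s,a) - V_π(s)`. -/
def Adv (M : FinMDP S A) (π : S → A → ℝ) (s : S) (a : A) : ℝ :=
  Qval M π s a - Vval M π s

/-- Total variation distance between two distributions over actions. -/
def DTV (p q : A → ℝ) : ℝ := (1 / 2) * ∑ a, |p a - q a|

/-- KL divergence between two distributions over actions. -/
def DKL (p q : A → ℝ) : ℝ := ∑ a, p a * Real.log (p a / q a)

section PDLaux

variable {S A : Type*} [Fintype S] [Fintype A] [DecidableEq S]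

lemma stepDist_nonneg (M : FinMDP S A) {π : S → A → ℝ} (hπ : IsPolicy π)
    {d : S → ℝ} (hd : ∀ s, 0 ≤ d s) : ∀ s', 0 ≤ stepDist M π d s' := by
  intro s'
  refine Finset.sum_nonneg fun s _ => Finset.sum_nonneg fun a _ => ?_
  exact mul_nonneg (mul_nonneg (hd s) (hπ.1 s a)) (M.P_nonneg s a s')

lemma stepDist_sum (M : FinMDP S A) {π : S → A → ℝ} (hπ : IsPolicy π)
    {d : S → ℝ} (hd : ∑ s, d s = 1) : ∑ s', stepDist M π d s' = 1 := by
  unfold stepDist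
  rw [Finset.sum_comm]
  have h : ∀ s, ∑ s', ∑ a, d s * π s a * M.P s a s' = d s := by
    intro s
    rw [Finset.sum_comm]
    have : ∀ a, ∑ s', d s * π s a * M.P s a s' = d s * π s a := by
      intro a
      rw [← Finset.mul_sum, M.P_sum, mul_one]
    simp_rw [this, ← Finset.mul_sum, hπ.2, mul_one]
  simp_rw [h, hd]

lemma stateDist_nonneg (M : FinMDP S A) {π : S → A → ℝ} (hπ : IsPolicy π) :
    ∀ t s, 0 ≤ stateDist M π t s := by
  intro t
  induction t with
  | zero => exact M.μ_nonneg
  | succ t ih => exact stepDist_nonneg M hπ ih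

lemma stateDist_sum (M : FinMDP S A) {π : S → A → ℝ} (hπ : IsPolicy π) :
    ∀ t, ∑ s, stateDist M π t s = 1 := by
  intro t
  induction t with
  | zero => exact M.μ_sum
  | succ t ih => exact stepDist_sum M hπ ih

lemma stateDistFrom_nonneg (M : FinMDP S A) {π : S → A → ℝ} (hπ : IsPolicy π) (s₀ : S) :
    ∀ t s, 0 ≤ stateDistFrom M π s₀ t s := by
  intro t
  induction t with
  | zero => intro s; simp [stateDistFrom]; positivity
  | succ t ih => exact stepDist_nonneg M hπ ih

lemma stateDistFrom_sum (M : FinMDP S A) {π : S → A → ℝ} (hπ : IsPolicy π) (s₀ : S) :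
    ∀ t, ∑ s, stateDistFrom M π s₀ t s = 1 := by
  intro t
  induction t with
  | zero => simp [stateDistFrom]
  | succ t ih => exact stepDist_sum M hπ ih

lemma dist_weight_bound {d x : S → ℝ} (hd : ∀ s, 0 ≤ d s) (hsum : ∑ s, d s = 1) :
    |∑ s, d s * x s| ≤ ∑ s, |x s| := by
  calc |∑ s, d s * x s| ≤ ∑ s, |d s * x s| := Finset.abs_sum_le_sum_abs _ _
    _ ≤ ∑ s, |x s| := by
        refine Finset.sum_le_sum fun s _ => ?_
        rw [abs_mul, abs_of_nonneg (hd s)]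
        have hle : d s ≤ 1 := hsum ▸ Finset.single_le_sum (fun i _ => hd i) (Finset.mem_univ s)
        nlinarith [abs_nonneg (x s)]

lemma summable_geom_mul {γ : ℝ} (h0 : 0 ≤ γ) (h1 : γ < 1) {f : ℕ → ℝ} {C : ℝ}
    (hf : ∀ t, |f t| ≤ C) : Summable (fun t => γ ^ t * f t) := by
  refine Summable.of_norm_bounded (g := fun t => C * γ ^ t)
    ((summable_geometric_of_lt_one h0 h1).mul_left C) fun t => ?_
  rw [Real.norm_eq_abs, abs_mul, abs_pow, abs_of_nonneg h0, mul_comm]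
  exact mul_le_mul_of_nonneg_right (hf t) (pow_nonneg h0 t)

lemma stepDist_linear (M : FinMDP S A) (π : S → A → ℝ) (c : S → ℝ) (f : S → S → ℝ) (s' : S) :
    stepDist M π (fun s => ∑ i, c i * f i s) s' = ∑ i, c i * stepDist M π (f i) s' := by
  unfold stepDist
  simp_rw [Finset.sum_mul, Finset.mul_sum]
  have h1 : ∀ s : S, (∑ a, ∑ i, c i * f i s * π s a * M.P s a s')
      = ∑ i, ∑ a, c i * f i s * π s a * M.P s a s' := fun s => Finset.sum_comm
  simp_rw [h1]
  rw [Finset.sum_comm]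
  exact Finset.sum_congr rfl fun i _ => Finset.sum_congr rfl fun s _ =>
    Finset.sum_congr rfl fun a _ => by ring

lemma stateDist_eq_sum_from (M : FinMDP S A) (π : S → A → ℝ) :
    ∀ t s, stateDist M π t s = ∑ s₀, M.μ s₀ * stateDistFrom M π s₀ t s := by
  intro t
  induction t with
  | zero =>
      intro s
      simp [stateDist, stateDistFrom, mul_ite, Finset.sum_ite_eq]
  | succ t ih =>
      intro s
      show stepDist M π (stateDist M π t) s = _
      have : stateDist M π t = fun s => ∑ s₀, M.μ s₀ * stateDistFrom M π s₀ t s := funext ih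
      rw [this, stepDist_linear]
      rfl

lemma Jret_eq_sum_Vval (M : FinMDP S A) {π : S → A → ℝ} (hπ : IsPolicy π) :
    Jret M π = ∑ s₀, M.μ s₀ * Vval M π s₀ := by
  unfold Jret Vval
  have key : ∀ t : ℕ, (M.γ ^ t * ∑ s, stateDist M π t s * ∑ a, π s a * M.r s a)
      = ∑ s₀, M.μ s₀ * (M.γ ^ t * ∑ s, stateDistFrom M π s₀ t s * ∑ a, π s a * M.r s a) := by
    intro t
    simp_rw [stateDist_eq_sum_from M π t, Finset.sum_mul, Finset.mul_sum]
    rw [Finset.sum_comm]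
    exact Finset.sum_congr rfl fun s₀ _ => Finset.sum_congr rfl fun s _ =>
      Finset.sum_congr rfl fun a _ => by ring
  simp_rw [key]
  rw [Summable.tsum_finsetSum (fun s₀ _ => ?_)]
  · exact Finset.sum_congr rfl fun s₀ _ => tsum_mul_left
  · refine Summable.mul_left _ (summable_geom_mul M.γ_nonneg M.γ_lt_one
      (C := ∑ s, |∑ a, π s a * M.r s a|) fun t => ?_)
    exact dist_weight_bound (stateDistFrom_nonneg M hπ s₀ t) (stateDistFrom_sum M hπ s₀ t)

end PDLaux

/-- Performance difference lemma (Kakade & Langford). -/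
theorem performance_difference (M : FinMDP S A) (π' π : S → A → ℝ)
    (hπ' : IsPolicy π') (hπ : IsPolicy π) :
    Jret M π' - Jret M π =
      (1 / (1 - M.γ)) * ∑ s, dVisit M π' s * ∑ a, π' s a * Adv M π s a := by
  have hγ0 := M.γ_nonneg
  have hγ1 := M.γ_lt_one
  have h1γ : (1 : ℝ) - M.γ ≠ 0 := by linarith
  -- bounds and summability
  have hCV : ∀ t, |∑ s, stateDist M π' t s * Vval M π s| ≤ ∑ s, |Vval M π s| :=
    fun t => dist_weight_bound (stateDist_nonneg M hπ' t) (stateDist_sum M hπ' t)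
  have hCR : ∀ t, |∑ s, stateDist M π' t s * ∑ a, π' s a * M.r s a|
      ≤ ∑ s, |∑ a, π' s a * M.r s a| :=
    fun t => dist_weight_bound (stateDist_nonneg M hπ' t) (stateDist_sum M hπ' t)
  have SG : Summable (fun t : ℕ => M.γ ^ t * ∑ s, stateDist M π' t s * Vval M π s) :=
    summable_geom_mul hγ0 hγ1 hCV
  have SG' : Summable (fun t : ℕ => M.γ ^ t * ∑ s, stateDist M π' (t + 1) s * Vval M π s) :=
    summable_geom_mul hγ0 hγ1 (fun t => hCV (t + 1))
  have SR : Summable (fun t : ℕ => M.γ ^ t * ∑ s, stateDist M π' t s * ∑ a, π' s a * M.r s a) :=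
    summable_geom_mul hγ0 hγ1 hCR
  -- key one-step algebra
  have key : ∀ t : ℕ, (∑ s, stateDist M π' t s * ∑ a, π' s a * Adv M π s a)
      = (∑ s, stateDist M π' t s * ∑ a, π' s a * M.r s a)
        + M.γ * (∑ s, stateDist M π' (t + 1) s * Vval M π s)
        - (∑ s, stateDist M π' t s * Vval M π s) := by
    intro t
    have hAdv : ∀ s, (∑ a, π' s a * Adv M π s a)
        = (∑ a, π' s a * M.r s a)
          + M.γ * (∑ a, π' s a * ∑ s', M.P s a s' * Vval M π s')
          - Vval M π s := by
      intro s
      unfold Adv Qval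
      have he : ∀ a, π' s a * (M.r s a + M.γ * ∑ s', M.P s a s' * Vval M π s' - Vval M π s)
          = π' s a * M.r s a + M.γ * (π' s a * ∑ s', M.P s a s' * Vval M π s')
            - π' s a * Vval M π s := fun a => by ring
      simp_rw [he, Finset.sum_sub_distrib, Finset.sum_add_distrib, ← Finset.mul_sum,
        ← Finset.sum_mul, hπ'.2, one_mul]
    have mid : (∑ s, stateDist M π' t s * ∑ a, π' s a * ∑ s', M.P s a s' * Vval M π s')
        = ∑ s', stateDist M π' (t + 1) s' * Vval M π s' := by
      show _ = ∑ s', stepDist M π' (stateDist M π' t) s' * Vval M π s'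
      unfold stepDist
      simp_rw [Finset.mul_sum, Finset.sum_mul]
      have h1 : ∀ s : S, (∑ a, ∑ s', stateDist M π' t s * (π' s a * (M.P s a s' * Vval M π s')))
          = ∑ s', ∑ a, stateDist M π' t s * (π' s a * (M.P s a s' * Vval M π s')) :=
        fun s => Finset.sum_comm
      simp_rw [h1]
      rw [Finset.sum_comm]
      exact Finset.sum_congr rfl fun s' _ => Finset.sum_congr rfl fun s _ =>
        Finset.sum_congr rfl fun a _ => by ring
    simp_rw [hAdv]
    rw [← mid]
    have he2 : ∀ s, stateDist M π' t s * ((∑ a, π' s a * M.r s a)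
          + M.γ * (∑ a, π' s a * ∑ s', M.P s a s' * Vval M π s') - Vval M π s)
        = stateDist M π' t s * (∑ a, π' s a * M.r s a)
          + M.γ * (stateDist M π' t s * (∑ a, π' s a * ∑ s', M.P s a s' * Vval M π s'))
          - stateDist M π' t s * Vval M π s := fun s => by ring
    simp_rw [he2, Finset.sum_sub_distrib, Finset.sum_add_distrib, ← Finset.mul_sum]
  -- the discounted sum of advantages telescopes
  have main : (∑' t : ℕ, M.γ ^ t * ∑ s, stateDist M π' t s * ∑ a, π' s a * Adv M π s a)
      = Jret M π' - ∑ s, M.μ s * Vval M π s := by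
    have e1 : ∀ t : ℕ, M.γ ^ t * (∑ s, stateDist M π' t s * ∑ a, π' s a * Adv M π s a)
        = M.γ ^ t * (∑ s, stateDist M π' t s * ∑ a, π' s a * M.r s a)
          + (M.γ * (M.γ ^ t * ∑ s, stateDist M π' (t + 1) s * Vval M π s)
            - M.γ ^ t * ∑ s, stateDist M π' t s * Vval M π s) := by
      intro t; rw [key t]; ring
    rw [tsum_congr e1, Summable.tsum_add SR (((SG'.mul_left M.γ)).sub SG),
      Summable.tsum_sub (SG'.mul_left M.γ) SG, tsum_mul_left]
    have hshift : (∑' t : ℕ, M.γ ^ t * ∑ s, stateDist M π' t s * Vval M π s)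
        = (∑ s, M.μ s * Vval M π s)
          + M.γ * ∑' t : ℕ, M.γ ^ t * ∑ s, stateDist M π' (t + 1) s * Vval M π s := by
      rw [Summable.tsum_eq_zero_add SG]
      simp only [pow_zero, one_mul]
      rw [← tsum_mul_left]
      congr 1
      exact tsum_congr fun t => by ring
    rw [hshift]
    show _ = Jret M π' - _
    unfold Jret
    ring
  -- relate the visitation-weighted sum to the discounted sum
  have hdv : (∑ s, dVisit M π' s * ∑ a, π' s a * Adv M π s a)
      = (1 - M.γ) * ∑' t : ℕ, M.γ ^ t * ∑ s, stateDist M π' t s * ∑ a, π' s a * Adv M π s a := by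
    unfold dVisit
    have hsum : ∀ s : S, Summable (fun t : ℕ =>
        M.γ ^ t * (stateDist M π' t s * ∑ a, π' s a * Adv M π s a)) := by
      intro s
      refine summable_geom_mul hγ0 hγ1 (C := |∑ a, π' s a * Adv M π s a|) fun t => ?_
      rw [abs_mul]
      have h0 : 0 ≤ stateDist M π' t s := stateDist_nonneg M hπ' t s
      have h1 : stateDist M π' t s ≤ 1 :=
        (stateDist_sum M hπ' t) ▸ Finset.single_le_sum
          (fun i _ => stateDist_nonneg M hπ' t i) (Finset.mem_univ s)
      rw [abs_of_nonneg h0]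
      nlinarith [abs_nonneg (∑ a, π' s a * Adv M π s a)]
    have e2 : ∀ s : S, ((1 - M.γ) * ∑' t : ℕ, M.γ ^ t * stateDist M π' t s)
          * (∑ a, π' s a * Adv M π s a)
        = (1 - M.γ) * ∑' t : ℕ,
            M.γ ^ t * (stateDist M π' t s * ∑ a, π' s a * Adv M π s a) := by
      intro s
      rw [mul_assoc, ← tsum_mul_right]
      congr 1
      exact tsum_congr fun t => by ring
    simp_rw [e2, ← Finset.mul_sum]
    congr 1
    rw [← Summable.tsum_finsetSum (fun s _ => hsum s)]
    refine tsum_congr fun t => ?_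
    rw [Finset.mul_sum]
  rw [hdv, Jret_eq_sum_Vval M hπ, ← main]
  field_simp
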